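/- Let q be a prime power, k ≥ 3, and consider the bipartite graph Λ_{k,q}. Given a backtrackless walk [l⁽¹⁾]⟨r⁽¹⁾⟩[l⁽²⁾]⟨r⁽²⁾⟩… in Λ_{k,q} starting with the all-zero vectors [l⁽¹⁾] = 0 and ⟨r⁽¹⁾⟩ = 0, with color differences u_i = x_{i+1} − x_i (first entries of the left vertices) and v_i = y_{i+1} − y_i (first entries of the right vertices), for all i ≥ 1 and j ≥ 0 one has: l⁽ⁱ⁺¹⁾_{4j} = ρ_{i−j−1}(u₁,v₁,…,u_{i−1},v_{i−1},u_i), l⁽ⁱ⁺¹⁾_{4j+1} = ρ_{i−j−2}(v₁,u₂,…,v_{i−1},u_i), l⁽ⁱ⁺¹⁾_{4j+2} = y_{i+1}·l⁽ⁱ⁺¹⁾_{4j} − ρ_{i−j−1}(u₁,v₁,…,u_i,v_i), and l⁽ⁱ⁺¹⁾_{4j+3} = y_{i+1}·l⁽ⁱ⁺¹⁾_{4j+1} − ρ_{i−j−2}(v₁,u₂,…,v_{i−1},u_i,v_i). -/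

import Mathlib

open Finset in
/-- `rho s l`: the sum over all ways of deleting `s` disjoint pairs of consecutive
elements from the sequence `l` of the product of the remaining elements.
(`rho 0 l` is the full product; `rho s l = 0` when `l.length < 2 * s`;
`rho s []` is `1` if `s = 0` and `0` otherwise.) -/
noncomputable def rho {R : Type*} [CommRing R] (s : ℕ) (l : List R) : R :=
  ∑ S ∈ ((Finset.range (l.length - 1)).powersetCard s).filter
      (fun S => ∀ i ∈ S, i + 1 ∉ S),
    ∏ j ∈ (Finset.range l.length).filter (fun j => j ∉ S ∧ j - 1 ∉ S), l.getD j (0 : R)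

/-- `rhoZ` extends `rho` to integer indices, with the convention `rho s = 0` for `s < 0`. -/
noncomputable def rhoZ {R : Type*} [CommRing R] (s : ℤ) (l : List R) : R :=
  if s < 0 then 0 else rho s.toNat l

/-- Vertices of one side of the graph `Λ(k,q)`: tuples of `k+1` elements of `F`,
modelled as functions `ℕ → F` vanishing above index `k`. -/
abbrev PVec (F : Type*) [Zero F] (k : ℕ) : Type _ := {f : ℕ → F // ∀ i, k < i → f i = 0}

/-- Adjacency condition between a left vertex `[l]` (with `l 1 = l 2`) and a right
vertex `⟨r⟩` (with `r 1 = 0`) in `Λ(k,q)`: for `2 ≤ i ≤ k`,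
`l i + r i = r 0 * l (i-2)` if `i ≡ 2, 3 (mod 4)` and
`l i + r i = l 0 * r (i-2)` if `i ≡ 0, 1 (mod 4)`. -/
def lamAdjLR {F : Type*} [Field F] (k : ℕ) (l r : ℕ → F) : Prop :=
  l 1 = l 2 ∧ r 1 = 0 ∧ ∀ i, 2 ≤ i → i ≤ k →
    ((i % 4 = 2 ∨ i % 4 = 3) → l i + r i = r 0 * l (i - 2)) ∧
    ((i % 4 = 0 ∨ i % 4 = 1) → l i + r i = l 0 * r (i - 2))

/-- The bipartite graph `Λ(k,q)` (the graph `Λ_{k,q}` of the paper, isomorphic to `D(k,q)`). -/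
def LambdaGraph (F : Type*) [Field F] (k : ℕ) : SimpleGraph (PVec F k ⊕ PVec F k) where
  Adj x y := match x, y with
    | Sum.inl l, Sum.inr r => lamAdjLR k l.1 r.1
    | Sum.inr r, Sum.inl l => lamAdjLR k l.1 r.1
    | _, _ => False
  symm := ⟨by rintro (l | r) (l' | r') h <;> exact h⟩
  loopless := ⟨by rintro (l | r) h <;> exact h⟩

/-- The sequence `u 1, v 1, u 2, v 2, …, u (i-1), v (i-1), u i` (length `2i - 1`). -/
def listA {F : Type*} (u v : ℕ → F) (i : ℕ) : List F :=
  List.ofFn (n := 2 * i - 1) fun m =>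
    if (m : ℕ) % 2 = 0 then u ((m : ℕ) / 2 + 1) else v ((m : ℕ) / 2 + 1)

/-- The sequence `v 1, u 2, v 2, …, v (i-1), u i` (length `2i - 2`). -/
def listB {F : Type*} (u v : ℕ → F) (i : ℕ) : List F :=
  List.ofFn (n := 2 * i - 2) fun m =>
    if (m : ℕ) % 2 = 0 then v ((m : ℕ) / 2 + 1) else u ((m : ℕ) / 2 + 2)

/-- The sequence `u 1, v 1, u 2, v 2, …, u i, v i` (length `2i`). -/
def listC {F : Type*} (u v : ℕ → F) (i : ℕ) : List F :=
  List.ofFn (n := 2 * i) fun m =>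
    if (m : ℕ) % 2 = 0 then u ((m : ℕ) / 2 + 1) else v ((m : ℕ) / 2 + 1)

/-- The sequence `v 1, u 2, v 2, …, v (i-1), u i, v i` (length `2i - 1`). -/
def listD {F : Type*} (u v : ℕ → F) (i : ℕ) : List F :=
  List.ofFn (n := 2 * i - 1) fun m =>
    if (m : ℕ) % 2 = 0 then v ((m : ℕ) / 2 + 1) else u ((m : ℕ) / 2 + 2)


section RhoLemmas
variable {R : Type*} [CommRing R]


lemma prod_range_getD (l : List R) : ∏ j ∈ Finset.range l.length, l.getD j 0 = l.prod := by
  rw [← Fin.prod_univ_eq_prod_range (fun j => l.getD j 0)]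
  conv_rhs => rw [← List.ofFn_get l, Fin.prod_ofFn]
  exact Finset.prod_congr rfl fun i _ => by simp [List.getD_eq_getElem?_getD]

lemma rho_zero' (l : List R) : rho 0 l = l.prod := by
  unfold rho
  rw [Finset.powersetCard_zero, Finset.filter_singleton, if_pos (by simp),
    Finset.sum_singleton, Finset.filter_true_of_mem (by simp), prod_range_getD]

lemma rho_nil (s : ℕ) : rho s ([] : List R) = if s = 0 then 1 else 0 := by
  rcases Nat.eq_zero_or_pos s with h | h
  · subst h; simp [rho_zero']
  unfold rho
  rw [if_neg h.ne']
  simp only [List.length_nil, Nat.zero_sub, Finset.range_zero]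
  rw [Finset.powersetCard_eq_empty.2 (by simpa using h)]
  simp



lemma noconsec_card {S : Finset ℕ} {m : ℕ} (hS : S ⊆ Finset.range m)
    (h : ∀ i ∈ S, i + 1 ∉ S) : 2 * S.card ≤ m + 1 := by
  have hinj : (S.image (· + 1)).card = S.card :=
    Finset.card_image_of_injective _ (fun a b hab => by omega)
  have hdisj : Disjoint S (S.image (· + 1)) := by
    rw [Finset.disjoint_right]
    intro x hx
    simp only [Finset.mem_image] at hx
    obtain ⟨i, hi, rfl⟩ := hx
    exact h i hi
  have hsub : S ∪ S.image (· + 1) ⊆ Finset.range (m + 1) := by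
    intro x hx
    rcases Finset.mem_union.1 hx with hx | hx
    · exact Finset.mem_range.2 (by have := Finset.mem_range.1 (hS hx); omega)
    · simp only [Finset.mem_image] at hx
      obtain ⟨i, hi, rfl⟩ := hx
      exact Finset.mem_range.2 (by have := Finset.mem_range.1 (hS hi); omega)
  have := Finset.card_le_card hsub
  rw [Finset.card_union_of_disjoint hdisj, hinj, Finset.card_range] at this
  omega

lemma rho_eq_zero (s : ℕ) (l : List R) (h : l.length < 2 * s) : rho s l = 0 := by
  unfold rho
  apply Finset.sum_eq_zero
  intro S hS
  exfalso
  simp only [Finset.mem_filter, Finset.mem_powersetCard] at hS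
  have := noconsec_card hS.1.1 hS.2
  rw [hS.1.2] at this
  omega


open Finset in
lemma rho_concat (l : List R) (hl : l ≠ []) (a : R) (s : ℕ) (hs : 1 ≤ s) :
    rho s (l ++ [a]) = a * rho s l + rho (s - 1) l.dropLast := by
  have hn1 : 1 ≤ l.length := List.length_pos_iff.2 hl
  set n := l.length with hn
  have hw : (l ++ [a]).length = n + 1 := by simp [hn]
  have hd : l.dropLast.length = n - 1 := by simp [hn]
  unfold rho
  rw [hw, hd, Nat.add_sub_cancel]
  rw [← Finset.sum_filter_add_sum_filter_not
    (((Finset.range n).powersetCard s).filter (fun S => ∀ i ∈ S, i + 1 ∉ S))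
    (fun S => n - 1 ∈ S)]
  have key1 : ∑ S ∈ ((((Finset.range n).powersetCard s).filter
        (fun S => ∀ i ∈ S, i + 1 ∉ S)).filter (fun S => ¬ n - 1 ∈ S)),
      ∏ j ∈ (Finset.range (n+1)).filter (fun j => j ∉ S ∧ j - 1 ∉ S), (l ++ [a]).getD j 0
      = a * ∑ S ∈ ((Finset.range (n - 1)).powersetCard s).filter (fun S => ∀ i ∈ S, i + 1 ∉ S),
      ∏ j ∈ (Finset.range n).filter (fun j => j ∉ S ∧ j - 1 ∉ S), l.getD j 0 := by
    have e1 : ((((Finset.range n).powersetCard s).filter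
        (fun S => ∀ i ∈ S, i + 1 ∉ S)).filter (fun S => ¬ n - 1 ∈ S))
        = ((Finset.range (n - 1)).powersetCard s).filter (fun S => ∀ i ∈ S, i + 1 ∉ S) := by
      ext S
      simp only [mem_filter, mem_powersetCard]
      constructor
      · rintro ⟨⟨⟨h2, h1⟩, h3⟩, h4⟩
        refine ⟨⟨fun x hx => ?_, h1⟩, h3⟩
        have hx1 := mem_range.1 (h2 hx)
        have hx2 : x ≠ n - 1 := fun h => h4 (h ▸ hx)
        exact mem_range.2 (by omega)
      · rintro ⟨⟨h2, h1⟩, h3⟩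
        refine ⟨⟨⟨fun x hx => ?_, h1⟩, h3⟩, fun h => ?_⟩
        · have := mem_range.1 (h2 hx)
          exact mem_range.2 (by omega)
        · have := mem_range.1 (h2 h); omega
    rw [e1, Finset.mul_sum]
    refine Finset.sum_congr rfl fun S hS => ?_
    simp only [mem_filter, mem_powersetCard] at hS
    have hSsub : ∀ x ∈ S, x < n - 1 := fun x hx => mem_range.1 (hS.1.1 hx)
    have e2 : (Finset.range (n+1)).filter (fun j => j ∉ S ∧ j - 1 ∉ S)
        = insert n ((Finset.range n).filter (fun j => j ∉ S ∧ j - 1 ∉ S)) := by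
      ext j
      simp only [mem_insert, mem_filter, mem_range]
      constructor
      · rintro ⟨hj, h1, h2⟩
        rcases Nat.lt_or_ge j n with h | h
        · exact Or.inr ⟨h, h1, h2⟩
        · exact Or.inl (by omega)
      · rintro (rfl | ⟨hj, h1, h2⟩)
        · refine ⟨by omega, fun h => by have := hSsub _ h; omega,
            fun h => by have := hSsub _ h; omega⟩
        · exact ⟨by omega, h1, h2⟩
    rw [e2, Finset.prod_insert (by simp)]
    have e3 : (l ++ [a]).getD n 0 = a := by
      rw [List.getD_eq_getElem?_getD, List.getElem?_append_right (le_refl _)]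
      simp
    rw [e3]
    congr 1
    refine Finset.prod_congr rfl fun j hj => ?_
    simp only [mem_filter, mem_range] at hj
    exact List.getD_append _ _ _ _ hj.1
  rw [key1]
  rw [add_comm]
  congr 1
  -- the n-1 ∈ S part equals rho (s-1) (dropLast)
  refine Finset.sum_nbij' (fun S => S.erase (n-1)) (fun S => insert (n-1) S) ?_ ?_ ?_ ?_ ?_
  · intro S hS
    simp only [mem_filter, mem_powersetCard] at hS ⊢
    obtain ⟨⟨⟨hsub, hcard⟩, hpred⟩, hmem⟩ := hS
    refine ⟨⟨fun x hx => ?_, ?_⟩, fun x hx => ?_⟩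
    · have hxS := Finset.mem_of_mem_erase hx
      have hxne := Finset.ne_of_mem_erase hx
      have hxn : x < n := mem_range.1 (hsub hxS)
      have hcons : x + 1 ≠ n - 1 := fun h => (hpred x hxS) (h ▸ hmem)
      exact mem_range.2 (by omega)
    · rw [Finset.card_erase_of_mem hmem, hcard]
    · exact fun h => (hpred x (Finset.mem_of_mem_erase hx)) (Finset.mem_of_mem_erase h)
  · intro S hS
    simp only [mem_filter, mem_powersetCard] at hS ⊢
    obtain ⟨⟨hsub, hcard⟩, hpred⟩ := hS
    have hSlt : ∀ x ∈ S, x < n - 1 - 1 := fun x hx => mem_range.1 (hsub hx)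
    have hnotmem : n - 1 ∉ S := fun h => by have := hSlt _ h; omega
    refine ⟨⟨⟨fun x hx => ?_, ?_⟩, fun x hx => ?_⟩, Finset.mem_insert_self _ _⟩
    · rcases Finset.mem_insert.1 hx with rfl | hx
      · exact mem_range.2 (by omega)
      · exact mem_range.2 (by have := hSlt _ hx; omega)
    · rw [Finset.card_insert_of_notMem hnotmem, hcard]; omega
    · rcases Finset.mem_insert.1 hx with rfl | hx
      · intro h
        rcases Finset.mem_insert.1 h with h | h
        · omega
        · have := hSlt _ h; omega
      · intro h
        rcases Finset.mem_insert.1 h with h | h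
        · have := hSlt _ hx; omega
        · exact hpred x hx h
  · intro S hS
    simp only [mem_filter] at hS
    exact Finset.insert_erase hS.2
  · intro S hS
    simp only [mem_filter, mem_powersetCard] at hS
    have hSlt : ∀ x ∈ S, x < n - 1 - 1 := fun x hx => mem_range.1 (hS.1.1 hx)
    exact Finset.erase_insert (fun h => by have := hSlt _ h; omega)
  · intro S hS
    simp only [mem_filter, mem_powersetCard] at hS
    obtain ⟨⟨⟨hsub, hcard⟩, hpred⟩, hmem⟩ := hS
    have e4 : (Finset.range (n+1)).filter (fun j => j ∉ S ∧ j - 1 ∉ S)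
        = (Finset.range (n-1)).filter
            (fun j => j ∉ S.erase (n-1) ∧ j - 1 ∉ S.erase (n-1)) := by
      ext j
      simp only [mem_filter, mem_range, Finset.mem_erase]
      constructor
      · rintro ⟨hj, h1, h2⟩
        have hj1 : j ≠ n - 1 := fun h => h1 (h ▸ hmem)
        have hj2 : j ≠ n := fun h => h2 (by subst h; simpa using hmem)
        exact ⟨by omega, fun h => h1 h.2, fun h => h2 h.2⟩
      · rintro ⟨hj, h1, h2⟩
        refine ⟨by omega, fun h => h1 ⟨by omega, h⟩, fun h => h2 ⟨by omega, h⟩⟩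
    rw [e4]
    refine Finset.prod_congr rfl fun j hj => ?_
    simp only [mem_filter, mem_range] at hj
    rw [List.getD_append _ _ _ _ (by omega), List.getD_eq_getElem?_getD,
      List.getD_eq_getElem?_getD, List.getElem?_dropLast]
    simp [show j < l.length - 1 by omega]

lemma rhoZ_neg {s : ℤ} (h : s < 0) (l : List R) : rhoZ s l = 0 := if_pos h

lemma rhoZ_natCast (s : ℕ) (l : List R) : rhoZ (s : ℤ) l = rho s l := by
  simp [rhoZ]

lemma rhoZ_concat (s : ℤ) (l : List R) (a : R) (h : l ≠ [] ∨ s ≤ 0) :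
    rhoZ s (l ++ [a]) = a * rhoZ s l + rhoZ (s - 1) l.dropLast := by
  rcases lt_trichotomy s 0 with hs | rfl | hs
  · rw [rhoZ_neg hs, rhoZ_neg hs, rhoZ_neg (by omega)]; ring
  · simp [rhoZ, rho_zero', List.prod_append, mul_comm]
  · have hl : l ≠ [] := by
      rcases h with h | h
      · exact h
      · omega
    have h1 : rhoZ s (l ++ [a]) = rho s.toNat (l ++ [a]) := if_neg (by omega)
    have h2 : rhoZ s l = rho s.toNat l := if_neg (by omega)
    have h3 : rhoZ (s - 1) l.dropLast = rho (s.toNat - 1) l.dropLast := by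
      rw [rhoZ, if_neg (by omega)]
      congr 1
      omega
    rw [h1, h2, h3, rho_concat l hl a s.toNat (by omega)]

lemma rho_full (s : ℕ) (l : List R) (h : l.length = 2 * s) : rho s l = 1 := by
  induction s generalizing l with
  | zero =>
    rw [rho_zero', List.length_eq_zero_iff.1 (show l.length = 0 by omega)]
    rfl
  | succ s ih =>
    have hl : l ≠ [] := by intro hc; rw [hc] at h; simp at h
    have hll := List.dropLast_concat_getLast hl
    have h1 : l.dropLast.length = 2 * s + 1 := by
      simp only [List.length_dropLast, h]; omega
    calc rho (s+1) l = rho (s+1) (l.dropLast ++ [l.getLast hl]) := by rw [hll]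
    _ = l.getLast hl * rho (s+1) l.dropLast + rho s l.dropLast.dropLast := by
        rw [rho_concat _ (by intro hc; rw [hc] at h1; simp at h1) _ _ (by omega)]
        norm_num
    _ = 1 := by
        rw [rho_eq_zero _ _ (by omega), ih _ (by simp only [List.length_dropLast, h1]; omega)]
        ring

lemma rhoZ_full (i : ℕ) (l : List R) (h : l.length = 2 * i) : rhoZ (i : ℤ) l = 1 := by
  rw [rhoZ_natCast, rho_full i l h]

end RhoLemmas

section ListLemmas
variable {F : Type*}


def gA (u v : ℕ → F) (m : ℕ) : F := if m % 2 = 0 then u (m / 2 + 1) else v (m / 2 + 1)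
def gB (u v : ℕ → F) (m : ℕ) : F := if m % 2 = 0 then v (m / 2 + 1) else u (m / 2 + 2)

lemma ofFn_nat_congr (g : ℕ → F) {n n' : ℕ} (h : n = n') :
    List.ofFn (n := n) (fun m => g m) = List.ofFn (n := n') (fun m => g m) := by subst h; rfl

lemma ofFn_nat_concat (g : ℕ → F) (n : ℕ) :
    List.ofFn (n := n + 1) (fun m => g m) = List.ofFn (n := n) (fun m => g m) ++ [g n] := by
  rw [List.ofFn_succ', List.concat_eq_append]
  congr 1

lemma listA_def (u v : ℕ → F) (i : ℕ) :
    listA u v i = List.ofFn (n := 2 * i - 1) (fun m => gA u v m) := rfl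
lemma listB_def (u v : ℕ → F) (i : ℕ) :
    listB u v i = List.ofFn (n := 2 * i - 2) (fun m => gB u v m) := rfl
lemma listC_def (u v : ℕ → F) (i : ℕ) :
    listC u v i = List.ofFn (n := 2 * i) (fun m => gA u v m) := rfl
lemma listD_def (u v : ℕ → F) (i : ℕ) :
    listD u v i = List.ofFn (n := 2 * i - 1) (fun m => gB u v m) := rfl

lemma listA_zero (u v : ℕ → F) : listA u v 0 = [] := rfl
lemma listB_zero (u v : ℕ → F) : listB u v 0 = [] := rfl
lemma listC_zero (u v : ℕ → F) : listC u v 0 = [] := rfl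
lemma listD_zero (u v : ℕ → F) : listD u v 0 = [] := rfl
lemma listB_one (u v : ℕ → F) : listB u v 1 = [] := rfl

lemma lenA (u v : ℕ → F) (i : ℕ) : (listA u v i).length = 2 * i - 1 := by simp [listA]
lemma lenB (u v : ℕ → F) (i : ℕ) : (listB u v i).length = 2 * i - 2 := by simp [listB]
lemma lenC (u v : ℕ → F) (i : ℕ) : (listC u v i).length = 2 * i := by simp [listC]
lemma lenD (u v : ℕ → F) (i : ℕ) : (listD u v i).length = 2 * i - 1 := by simp [listD]

lemma cidA (u v : ℕ → F) (i : ℕ) (hi : 1 ≤ i) :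
    listA u v i = listC u v (i - 1) ++ [u i] := by
  rw [listA_def, listC_def, ofFn_nat_congr (gA u v) (show 2*i-1 = 2*(i-1)+1 by omega),
    ofFn_nat_concat]
  congr 2
  have h0 : (2 * (i-1)) % 2 = 0 := by omega
  rw [gA, if_pos h0]
  congr 1
  omega

lemma cidC (u v : ℕ → F) (i : ℕ) (hi : 1 ≤ i) :
    listC u v i = listA u v i ++ [v i] := by
  rw [listA_def, listC_def, ofFn_nat_congr (gA u v) (show 2*i = (2*i-1)+1 by omega),
    ofFn_nat_concat]
  congr 2
  have h0 : ¬ (2*i-1) % 2 = 0 := by omega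
  rw [gA, if_neg h0]
  congr 1
  omega

lemma cidB (u v : ℕ → F) (i : ℕ) (hi : 2 ≤ i) :
    listB u v i = listD u v (i - 1) ++ [u i] := by
  rw [listB_def, listD_def, ofFn_nat_congr (gB u v) (show 2*i-2 = (2*(i-1)-1)+1 by omega),
    ofFn_nat_concat]
  congr 2
  have h0 : ¬ (2*(i-1)-1) % 2 = 0 := by omega
  rw [gB, if_neg h0]
  congr 1
  omega

lemma cidD (u v : ℕ → F) (i : ℕ) (hi : 1 ≤ i) :
    listD u v i = listB u v i ++ [v i] := by
  rw [listB_def, listD_def, ofFn_nat_congr (gB u v) (show 2*i-1 = (2*i-2)+1 by omega),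
    ofFn_nat_concat]
  congr 2
  have h0 : (2*i-2) % 2 = 0 := by omega
  rw [gB, if_pos h0]
  congr 1
  omega

lemma dlA (u v : ℕ → F) (i : ℕ) (hi : 1 ≤ i) :
    (listA u v i).dropLast = listC u v (i - 1) := by
  rw [cidA u v i hi, List.dropLast_concat]
lemma dlC (u v : ℕ → F) (i : ℕ) (hi : 1 ≤ i) :
    (listC u v i).dropLast = listA u v i := by
  rw [cidC u v i hi, List.dropLast_concat]
lemma dlB (u v : ℕ → F) (i : ℕ) (hi : 2 ≤ i) :
    (listB u v i).dropLast = listD u v (i - 1) := by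
  rw [cidB u v i hi, List.dropLast_concat]
lemma dlD (u v : ℕ → F) (i : ℕ) (hi : 1 ≤ i) :
    (listD u v i).dropLast = listB u v i := by
  rw [cidD u v i hi, List.dropLast_concat]

lemma listA_ne_nil (u v : ℕ → F) (i : ℕ) (hi : 1 ≤ i) : listA u v i ≠ [] := by
  intro h
  have := lenA u v i
  rw [h] at this
  simp at this
  omega

lemma listC_ne_nil {u v : ℕ → F} {i : ℕ} (hi : 1 ≤ i) : listC u v i ≠ [] := by
  intro h
  have := lenC u v i
  rw [h] at this
  simp at this
  omega

lemma listD_ne_nil {u v : ℕ → F} {i : ℕ} (hi : 1 ≤ i) : listD u v i ≠ [] := by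
  intro h
  have := lenD u v i
  rw [h] at this
  simp at this
  omega

lemma listB_ne_nil {u v : ℕ → F} {i : ℕ} (hi : 2 ≤ i) : listB u v i ≠ [] := by
  intro h
  have := lenB u v i
  rw [h] at this
  simp at this
  omega

end ListLemmas


section RecLemmas
variable {R : Type*} [CommRing R] (u v : ℕ → R)

lemma recA (i : ℕ) (hi : 1 ≤ i) (s : ℤ) (hs : s ≤ (i : ℤ) - 1) :
    rhoZ s (listA u v i) = u i * rhoZ s (listC u v (i - 1)) + rhoZ (s - 1) (listA u v (i - 1)) := by
  rcases Nat.lt_or_ge i 2 with h | h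
  · interval_cases i
    rw [cidA u v 1 (by omega), rhoZ_concat _ _ _ (Or.inr (by omega))]
    simp [listC_zero, listA_zero]
  · rw [cidA u v i hi, rhoZ_concat _ _ _ (Or.inl (listC_ne_nil (by omega))),
      dlC u v (i-1) (by omega)]

lemma recC (i : ℕ) (hi : 1 ≤ i) (s : ℤ) :
    rhoZ s (listC u v i) = v i * rhoZ s (listA u v i) + rhoZ (s - 1) (listC u v (i - 1)) := by
  rw [cidC u v i hi, rhoZ_concat _ _ _ (Or.inl (listA_ne_nil u v i hi)), dlA u v i hi]

lemma recB (i : ℕ) (hi : 1 ≤ i) (s : ℤ) (hs : s ≤ (i : ℤ) - 2) :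
    rhoZ s (listB u v i) = u i * rhoZ s (listD u v (i - 1)) + rhoZ (s - 1) (listB u v (i - 1)) := by
  rcases Nat.lt_or_ge i 2 with h | h
  · interval_cases i
    rw [listB_one, listD_zero, listB_zero]
    rw [rhoZ_neg (show s < 0 by omega), rhoZ_neg (show s - 1 < 0 by omega)]
    ring
  · rw [cidB u v i h, rhoZ_concat _ _ _ (Or.inl (listD_ne_nil (by omega : 1 ≤ i - 1))),
      dlD u v (i-1) (by omega)]

lemma recD (i : ℕ) (hi : 1 ≤ i) (s : ℤ) (hs : s ≤ (i : ℤ) - 1) :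
    rhoZ s (listD u v i) = v i * rhoZ s (listB u v i) + rhoZ (s - 1) (listD u v (i - 1)) := by
  rcases Nat.lt_or_ge i 2 with h | h
  · interval_cases i
    rw [cidD u v 1 (by omega), rhoZ_concat _ _ _ (Or.inr (by omega))]
    simp [listB_one, listD_zero]
  · rw [cidD u v i hi, rhoZ_concat _ _ _ (Or.inl (listB_ne_nil h)), dlB u v i h]

lemma rhoA_top (i : ℕ) :
    rhoZ ((i : ℤ) - 1) (listA u v i) = ∑ t ∈ Finset.Icc 1 i, u t := by
  induction i with
  | zero => rw [listA_zero, rhoZ_neg (by omega)]; simp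
  | succ m ih =>
    rw [recA u v (m+1) (by omega) _ (by push_cast; omega),
      show (m + 1 : ℕ) - 1 = m from by omega,
      show ((m+1:ℕ):ℤ) - 1 = ((m:ℕ):ℤ) from by push_cast; ring,
      rhoZ_full m _ (lenC u v m), ih, Finset.sum_Icc_succ_top (by omega)]
    ring

lemma rhoD_top (i : ℕ) :
    rhoZ ((i : ℤ) - 1) (listD u v i) = ∑ t ∈ Finset.Icc 1 i, v t := by
  induction i with
  | zero => rw [listD_zero, rhoZ_neg (by omega)]; simp
  | succ m ih =>
    have hlen : (listB u v (m+1)).length = 2 * m := by rw [lenB]; omega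
    rw [recD u v (m+1) (by omega) _ (by push_cast; omega),
      show (m + 1 : ℕ) - 1 = m from by omega,
      show ((m+1:ℕ):ℤ) - 1 = ((m:ℕ):ℤ) from by push_cast; ring,
      rhoZ_full m _ hlen, ih, Finset.sum_Icc_succ_top (by omega)]
    ring

lemma rhoBC (i : ℕ) :
    rhoZ ((i : ℤ) - 2) (listB u v i) + rhoZ ((i : ℤ) - 1) (listC u v i)
      = (∑ t ∈ Finset.Icc 1 i, v t) * (∑ t ∈ Finset.Icc 1 i, u t) := by
  induction i with
  | zero =>
    rw [listB_zero, listC_zero, rhoZ_neg (by omega), rhoZ_neg (by omega)]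
    simp
  | succ m ih =>
    rw [recB u v (m+1) (by omega) _ (by push_cast; omega),
      recC u v (m+1) (by omega),
      show (m + 1 : ℕ) - 1 = m from by omega,
      show ((m+1:ℕ):ℤ) - 2 = ((m:ℕ):ℤ) - 1 from by push_cast; ring,
      show ((m+1:ℕ):ℤ) - 1 - 1 = ((m:ℕ):ℤ) - 1 from by push_cast; ring,
      show ((m:ℕ):ℤ) - 1 - 1 = ((m:ℕ):ℤ) - 2 from by ring,
      rhoD_top u v m, rhoA_top u v (m+1),
      Finset.sum_Icc_succ_top (show 1 ≤ m + 1 by omega) u,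
      Finset.sum_Icc_succ_top (show 1 ≤ m + 1 by omega) v]
    linear_combination ih

end RecLemmas

/-- Theorem 1 of the paper: closed form for the entries of the left vertices of a
backtrackless walk `[L 1]⟨R 1⟩[L 2]⟨R 2⟩…` in `Λ(k,q)` starting with the all-zero vectors. -/
theorem lambda_walk_closed_form (q k : ℕ) (hq : IsPrimePow q) (hk : 3 ≤ k)
    (F : Type*) [Field F] [Fintype F] (hF : Fintype.card F = q)
    (L R : ℕ → PVec F k)
    (hL1 : ∀ m, (L 1).1 m = 0) (hR1 : ∀ m, (R 1).1 m = 0)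
    (hadj₁ : ∀ i, 1 ≤ i → (LambdaGraph F k).Adj (Sum.inl (L i)) (Sum.inr (R i)))
    (hadj₂ : ∀ i, 1 ≤ i → (LambdaGraph F k).Adj (Sum.inr (R i)) (Sum.inl (L (i + 1))))
    (hbtL : ∀ i, 1 ≤ i → L i ≠ L (i + 1))
    (hbtR : ∀ i, 1 ≤ i → R i ≠ R (i + 1))
    (u v : ℕ → F)
    (hu : ∀ i, 1 ≤ i → u i = (L (i + 1)).1 0 - (L i).1 0)
    (hv : ∀ i, 1 ≤ i → v i = (R (i + 1)).1 0 - (R i).1 0)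
    (i j : ℕ) (hi : 1 ≤ i) :
    (4 * j ≤ k →
      (L (i + 1)).1 (4 * j) = rhoZ ((i : ℤ) - j - 1) (listA u v i)) ∧
    (4 * j + 1 ≤ k →
      (L (i + 1)).1 (4 * j + 1) = rhoZ ((i : ℤ) - j - 2) (listB u v i)) ∧
    (4 * j + 2 ≤ k →
      (L (i + 1)).1 (4 * j + 2) =
        (R (i + 1)).1 0 * (L (i + 1)).1 (4 * j) - rhoZ ((i : ℤ) - j - 1) (listC u v i)) ∧
    (4 * j + 3 ≤ k →
      (L (i + 1)).1 (4 * j + 3) =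
        (R (i + 1)).1 0 * (L (i + 1)).1 (4 * j + 1) - rhoZ ((i : ℤ) - j - 2) (listD u v i)) := by
  classical
  have adj1 : ∀ m, 1 ≤ m → lamAdjLR k (L m).1 (R m).1 := fun m hm => hadj₁ m hm
  have adj2 : ∀ m, 1 ≤ m → lamAdjLR k (L (m + 1)).1 (R m).1 := fun m hm => hadj₂ m hm
  have xval : ∀ m : ℕ, (L (m + 1)).1 0 = ∑ t ∈ Finset.Icc 1 m, u t := by
    intro m
    induction m with
    | zero => simpa using hL1 0
    | succ p ih =>
      have hup := hu (p + 1) (by omega)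
      rw [Finset.sum_Icc_succ_top (by omega), ← ih]
      linear_combination -hup
  have yval : ∀ m : ℕ, (R (m + 1)).1 0 = ∑ t ∈ Finset.Icc 1 m, v t := by
    intro m
    induction m with
    | zero => simpa using hR1 0
    | succ p ih =>
      have hvp := hv (p + 1) (by omega)
      rw [Finset.sum_Icc_succ_top (by omega), ← ih]
      linear_combination -hvp
  suffices H : ∀ n : ℕ, ∀ j : ℕ,
      (4*j ≤ k → (L (n+1)).1 (4*j) = rhoZ ((n:ℤ) - j - 1) (listA u v n)) ∧
      (4*j+1 ≤ k → (L (n+1)).1 (4*j+1) = rhoZ ((n:ℤ) - j - 2) (listB u v n)) ∧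
      (4*j+2 ≤ k → (R (n+1)).1 (4*j+2) = rhoZ ((n:ℤ) - j - 1) (listC u v n)) ∧
      (4*j+3 ≤ k → (R (n+1)).1 (4*j+3) = rhoZ ((n:ℤ) - j - 2) (listD u v n)) by
    obtain ⟨h1, h2, h3, h4⟩ := H i j
    refine ⟨h1, h2, fun hk2 => ?_, fun hk3 => ?_⟩
    · obtain ⟨-, -, hmain⟩ := adj1 (i + 1) (by omega)
      have e := (hmain (4*j+2) (by omega) hk2).1 (by omega)
      simp only [Nat.add_sub_cancel] at e
      rw [← h3 hk2]
      linear_combination e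
    · obtain ⟨-, -, hmain⟩ := adj1 (i + 1) (by omega)
      have e := (hmain (4*j+3) (by omega) hk3).1 (by omega)
      rw [show 4*j+3-2 = 4*j+1 from by omega] at e
      rw [← h4 hk3]
      linear_combination e
  intro n
  induction n with
  | zero =>
    intro j
    exact ⟨fun _ => by rw [rhoZ_neg (by omega)]; exact hL1 _,
           fun _ => by rw [rhoZ_neg (by omega)]; exact hL1 _,
           fun _ => by rw [rhoZ_neg (by omega)]; exact hR1 _,
           fun _ => by rw [rhoZ_neg (by omega)]; exact hR1 _⟩
  | succ p ih =>
    obtain ⟨hl12_1, -, hmain1⟩ := adj1 (p + 1) (by omega)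
    obtain ⟨hl12_2, -, hmain2⟩ := adj2 (p + 1) (by omega)
    obtain ⟨hl12_3, -, hmain3⟩ := adj1 (p + 1 + 1) (by omega)
    have hup := hu (p + 1) (by omega)
    have hvp := hv (p + 1) (by omega)
    have SA : ∀ j : ℕ, 4*j ≤ k →
        (L (p+1+1)).1 (4*j) = rhoZ (((p+1 : ℕ):ℤ) - j - 1) (listA u v (p+1)) := by
      intro j hk4
      by_cases hj : j = 0
      · subst hj
        rw [show ((p+1 : ℕ):ℤ) - ((0:ℕ):ℤ) - 1 = ((p+1 : ℕ):ℤ) - 1 from by push_cast; ring,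
          rhoA_top u v (p+1), show 4*0 = 0 from by omega]
        exact xval (p+1)
      · have e1 := (hmain1 (4*j) (by omega) hk4).2 (by omega)
        have e2 := (hmain2 (4*j) (by omega) hk4).2 (by omega)
        have hC := (ih (j-1)).2.2.1 (by omega)
        have hA := (ih j).1 (by omega)
        rw [show 4*(j-1)+2 = 4*j-2 from by omega,
          show ((p:ℕ):ℤ) - ((j-1:ℕ):ℤ) - 1 = ((p+1:ℕ):ℤ) - (j:ℕ) - 1 from by omega] at hC
        rw [recA u v (p+1) (by omega) _ (by push_cast; omega),
          Nat.add_sub_cancel,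
          show ((p+1:ℕ):ℤ) - (j:ℕ) - 1 - 1 = ((p:ℕ):ℤ) - (j:ℕ) - 1 from by push_cast; ring,
          ← hC, ← hA]
        linear_combination e2 - e1 - (R (p+1)).1 (4*j-2) * hup
    have SC : ∀ j : ℕ, 4*j+2 ≤ k →
        (R (p+1+1)).1 (4*j+2) = rhoZ (((p+1 : ℕ):ℤ) - j - 1) (listC u v (p+1)) := by
      intro j hk4
      have e1 := (hmain2 (4*j+2) (by omega) hk4).1 (by omega)
      have e2 := (hmain3 (4*j+2) (by omega) hk4).1 (by omega)
      simp only [Nat.add_sub_cancel] at e1 e2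
      have hCp := (ih j).2.2.1 hk4
      have hA := SA j (by omega)
      rw [recC u v (p+1) (by omega),
        Nat.add_sub_cancel,
        show ((p+1:ℕ):ℤ) - (j:ℕ) - 1 - 1 = ((p:ℕ):ℤ) - (j:ℕ) - 1 from by push_cast; ring,
        ← hCp, ← hA]
      linear_combination e2 - e1 - (L (p+1+1)).1 (4*j) * hvp
    have SB : ∀ j : ℕ, 4*j+1 ≤ k →
        (L (p+1+1)).1 (4*j+1) = rhoZ (((p+1 : ℕ):ℤ) - j - 2) (listB u v (p+1)) := by
      intro j hk4
      by_cases hj : j = 0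
      · subst hj
        have e2 := (hmain3 2 (by omega) (by omega)).1 (by omega)
        have hC0 := SC 0 (by omega)
        rw [show 4*0+2 = 2 from by omega] at hC0
        have hBC := rhoBC u v (p+1)
        have hx := xval (p+1)
        have hy := yval (p+1)
        rw [show ((p+1 : ℕ):ℤ) - ((0:ℕ):ℤ) - 2 = ((p+1 : ℕ):ℤ) - 2 from by push_cast; ring,
          show 4*0+1 = 1 from by omega]
        rw [show ((p+1 : ℕ):ℤ) - ((0:ℕ):ℤ) - 1 = ((p+1 : ℕ):ℤ) - 1 from by push_cast; ring] at hC0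
        have e2' : (L (p+1+1)).1 2 + (R (p+1+1)).1 2
            = (R (p+1+1)).1 0 * (L (p+1+1)).1 0 := by
          simpa using e2
        linear_combination hl12_3 + e2' - hC0 - hBC + (L (p+1+1)).1 0 * hy
          + (∑ t ∈ Finset.Icc 1 (p+1), v t) * hx
      · have e1 := (hmain1 (4*j+1) (by omega) hk4).2 (by omega)
        have e2 := (hmain2 (4*j+1) (by omega) hk4).2 (by omega)
        rw [show 4*j+1-2 = 4*j-1 from by omega] at e1 e2
        have hD := (ih (j-1)).2.2.2 (by omega)
        have hB := (ih j).2.1 (by omega)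
        rw [show 4*(j-1)+3 = 4*j-1 from by omega,
          show ((p:ℕ):ℤ) - ((j-1:ℕ):ℤ) - 2 = ((p+1:ℕ):ℤ) - (j:ℕ) - 2 from by omega] at hD
        rw [recB u v (p+1) (by omega) _ (by push_cast; omega),
          Nat.add_sub_cancel,
          show ((p+1:ℕ):ℤ) - (j:ℕ) - 2 - 1 = ((p:ℕ):ℤ) - (j:ℕ) - 2 from by push_cast; ring,
          ← hD, ← hB]
        linear_combination e2 - e1 - (R (p+1)).1 (4*j-1) * hup
    have SD : ∀ j : ℕ, 4*j+3 ≤ k →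
        (R (p+1+1)).1 (4*j+3) = rhoZ (((p+1 : ℕ):ℤ) - j - 2) (listD u v (p+1)) := by
      intro j hk4
      have e1 := (hmain2 (4*j+3) (by omega) hk4).1 (by omega)
      have e2 := (hmain3 (4*j+3) (by omega) hk4).1 (by omega)
      rw [show 4*j+3-2 = 4*j+1 from by omega] at e1 e2
      have hDp := (ih j).2.2.2 hk4
      have hB := SB j (by omega)
      rw [recD u v (p+1) (by omega) _ (by push_cast; omega),
        Nat.add_sub_cancel,
        show ((p+1:ℕ):ℤ) - (j:ℕ) - 2 - 1 = ((p:ℕ):ℤ) - (j:ℕ) - 2 from by push_cast; ring,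
        ← hDp, ← hB]
      linear_combination e2 - e1 - (L (p+1+1)).1 (4*j+1) * hvp
    intro j
    exact ⟨SA j, SB j, SC j, SD j⟩
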